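/- Let e_j(y) = exp((i/h)⟨y, ξ_j⟩), j = 1, ..., N, where the ξ_j ∈ ℝⁿ are pairwise separated by at least h: |ξ_j - ξ_m| ≥ c₀ h for j ≠ m. Then the Gram matrix M_{jm} = ∫_{B_1(0)} e_j(y) \overline{e_m(y)} dy satisfies: the functions e_j are almost orthogonal in the sense that there exists C (depending on n, c₀ but not on h or N) such that for all a ∈ ℝ^N, ‖Σ_j a_j e_j‖²_{L²(B_1(0))} ≤ C ‖a‖²_{ℓ²}. -/

import Mathlib

open MeasureTheory Metric Complex RealInnerProductSpace

noncomputable section AuxStmt16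
variable {n : ℕ}

lemma gauss_integrable {b : ℝ} (hb : 0 < b) :
    Integrable (fun v : EuclideanSpace ℝ (Fin n) => Real.exp (-b * ‖v‖^2)) := by
  have h := (GaussianFourier.integrable_cexp_neg_mul_sq_norm_add (V := EuclideanSpace ℝ (Fin n))
    (b := (b : ℂ)) (by simpa using hb) 0 0).norm
  convert h using 2 with v
  simp [Complex.norm_exp]
  left; norm_cast

lemma gauss_integral : (0:ℝ) = 0 := rfl

lemma gauss_integral' {b : ℝ} (hb : 0 < b) (w : EuclideanSpace ℝ (Fin n)) :
    ∫ v : EuclideanSpace ℝ (Fin n), Real.exp (-b * ‖v - w‖^2)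
      = (Real.pi / b) ^ ((n:ℝ)/2) := by
  rw [integral_sub_right_eq_self (fun v => Real.exp (-b * ‖v‖^2)) w]
  rw [GaussianFourier.integral_rexp_neg_mul_sq_norm hb]
  norm_num [finrank_euclideanSpace_fin]

lemma rowsum' {c : ℝ} (hc : 0 < c) {N : ℕ} (z : Fin N → EuclideanSpace ℝ (Fin n))
    (hz : ∀ j m : Fin N, j ≠ m → 2 * c ≤ dist (z j) (z m)) (j : Fin N) :
    ∑ m, Real.exp (-(dist (z j) (z m))^2 / 2) ≤
      Real.exp (c^2/2) * (4*Real.pi) ^ ((n:ℝ)/2)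
        / (volume (ball (0 : EuclideanSpace ℝ (Fin n)) c)).toReal := by
  set V : ℝ := (volume (ball (0 : EuclideanSpace ℝ (Fin n)) c)).toReal with hV
  have hVpos : 0 < V := by
    rw [hV]
    refine ENNReal.toReal_pos (ne_of_gt (measure_ball_pos volume 0 hc)) (measure_ball_lt_top).ne
  have hg : Integrable (fun x : EuclideanSpace ℝ (Fin n) =>
      Real.exp (-(1/4 : ℝ) * ‖x - z j‖^2)) := by
    exact (gauss_integrable (by norm_num)).comp_sub_right (z j)
  -- key pointwise bound
  have key : ∀ m : Fin N, Real.exp (-(dist (z j) (z m))^2 / 2) * V ≤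
      Real.exp (c^2/2) * ∫ x in ball (z m) c,
        Real.exp (-(1/4 : ℝ) * ‖x - z j‖^2) := by
    intro m
    set d := dist (z j) (z m) with hd
    have hd0 : 0 ≤ d := dist_nonneg
    have hball : ∀ x ∈ ball (z m) c,
        Real.exp (-d^2/2) * Real.exp (-(c^2/2)) ≤ Real.exp (-(1/4:ℝ) * ‖x - z j‖^2) := by
      intro x hx
      rw [← Real.exp_add]
      apply Real.exp_le_exp.2
      have h1 : ‖x - z j‖ ≤ d + c := by
        have := dist_triangle (z j) (z m) x
        rw [ball, Set.mem_setOf_eq] at hx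
        calc ‖x - z j‖ = dist (z j) x := by rw [dist_eq_norm, norm_sub_rev]
        _ ≤ d + dist (z m) x := this
        _ ≤ d + c := by rw [dist_comm]; linarith [hx.le]
      have h2 : ‖x - z j‖^2 ≤ (d+c)^2 := by
        apply pow_le_pow_left₀ (norm_nonneg _) h1
      nlinarith [sq_nonneg (d - c), norm_nonneg (x - z j)]
    calc Real.exp (-d^2/2) * V
        = Real.exp (c^2/2) * ((Real.exp (-d^2/2) * Real.exp (-(c^2/2))) * V) := by
          rw [show Real.exp (c^2/2) * ((Real.exp (-d^2/2) * Real.exp (-(c^2/2))) * V)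
            = (Real.exp (c^2/2) * Real.exp (-(c^2/2))) * (Real.exp (-d^2/2) * V) from by ring,
            ← Real.exp_add]
          norm_num
      _ ≤ Real.exp (c^2/2) * ∫ x in ball (z m) c, Real.exp (-(1/4:ℝ) * ‖x - z j‖^2) := by
          apply mul_le_mul_of_nonneg_left _ (Real.exp_nonneg _)
          have : V = (volume (ball (z m) c)).toReal := by
            simp [hV, Measure.addHaar_ball_center]
          rw [this]
          have := MeasureTheory.setIntegral_mono_on
            (f := fun _ => Real.exp (-d^2/2) * Real.exp (-(c^2/2)))
            (g := fun x => Real.exp (-(1/4:ℝ) * ‖x - z j‖^2))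
            (integrableOn_const measure_ball_lt_top.ne)
            (hg.integrableOn) measurableSet_ball hball
          simpa [MeasureTheory.setIntegral_const, smul_eq_mul, mul_comm, Measure.real] using this
  -- disjointness and summation
  have hdisj : Set.Pairwise ↑(Finset.univ : Finset (Fin N))
      (Function.onFun Disjoint (fun m => ball (z m) c)) := by
    intro m _ m' _ hmm
    exact ball_disjoint_ball (by linarith [hz m m' hmm])
  have hsum : ∑ m : Fin N, ∫ x in ball (z m) c, Real.exp (-(1/4:ℝ) * ‖x - z j‖^2)
      ≤ ∫ x : EuclideanSpace ℝ (Fin n), Real.exp (-(1/4:ℝ) * ‖x - z j‖^2) := by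
    rw [← MeasureTheory.integral_biUnion_finset Finset.univ
      (fun m _ => measurableSet_ball) hdisj (fun m _ => hg.integrableOn)]
    apply setIntegral_le_integral hg
    filter_upwards with x using Real.exp_nonneg _
  have total : (∑ m, Real.exp (-(dist (z j) (z m))^2 / 2)) * V ≤
      Real.exp (c^2/2) * (4*Real.pi) ^ ((n:ℝ)/2) := by
    rw [Finset.sum_mul]
    calc ∑ m, Real.exp (-(dist (z j) (z m))^2/2) * V
        ≤ ∑ m, Real.exp (c^2/2) * ∫ x in ball (z m) c,
            Real.exp (-(1/4:ℝ) * ‖x - z j‖^2) := Finset.sum_le_sum (fun m _ => key m)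
      _ = Real.exp (c^2/2) * ∑ m, ∫ x in ball (z m) c,
            Real.exp (-(1/4:ℝ) * ‖x - z j‖^2) := by rw [Finset.mul_sum]
      _ ≤ Real.exp (c^2/2) * ∫ x : EuclideanSpace ℝ (Fin n),
            Real.exp (-(1/4:ℝ) * ‖x - z j‖^2) := by
          apply mul_le_mul_of_nonneg_left hsum (Real.exp_nonneg _)
      _ = Real.exp (c^2/2) * (4*Real.pi) ^ ((n:ℝ)/2) := by
          rw [gauss_integral' (by norm_num)]
          norm_num [div_eq_mul_inv, mul_comm]
  rw [le_div_iff₀ hVpos]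
  exact total

open RealInnerProductSpace in
lemma gram_entry' (w : EuclideanSpace ℝ (Fin n)) :
    ∫ y : EuclideanSpace ℝ (Fin n),
        Complex.exp (-(1/2 : ℂ) * (‖y‖:ℂ)^2 + Complex.I * (⟪w, y⟫ : ℝ)) =
      (((2*Real.pi) ^ ((n:ℝ)/2) * Real.exp (-‖w‖^2/2) : ℝ) : ℂ) := by
  rw [GaussianFourier.integral_cexp_neg_mul_sq_norm_add (by norm_num) Complex.I w]
  rw [finrank_euclideanSpace_fin]
  rw [Complex.ofReal_mul]
  congr 1
  · have h1 : ((Real.pi : ℂ) / (1/2 : ℂ)) = ((2*Real.pi : ℝ) : ℂ) := by push_cast; ring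
    have h2 : ((n : ℂ)/2) = (((n:ℝ)/2 : ℝ) : ℂ) := by push_cast; ring
    rw [h1, h2, ← Complex.ofReal_cpow (by positivity)]
  · rw [Complex.I_sq]
    rw [show (-1 * (‖w‖:ℂ)^2 / (4 * (1/2 : ℂ))) = (((-‖w‖^2/2 : ℝ)) : ℂ) by push_cast; ring]
    rw [Complex.ofReal_exp]

lemma sum_mul_conj {N : ℕ} (a : Fin N → ℝ) (t : Fin N → ℝ) :
    (∑ j, (a j : ℂ) * Complex.exp (Complex.I * (t j : ℝ))) *
      (starRingEnd ℂ) (∑ m, (a m : ℂ) * Complex.exp (Complex.I * (t m : ℝ))) =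
    ∑ j, ∑ m, ((a j * a m : ℝ) : ℂ) * Complex.exp (Complex.I * ((t j - t m : ℝ) : ℂ)) := by
  rw [map_sum, Finset.sum_mul_sum]
  refine Finset.sum_congr rfl (fun j _ => Finset.sum_congr rfl (fun m _ => ?_))
  rw [map_mul, Complex.conj_ofReal, ← Complex.exp_conj]
  rw [show (starRingEnd ℂ) (Complex.I * (t m : ℝ)) = -(Complex.I * (t m : ℝ)) by
    simp [Complex.conj_I]]
  rw [mul_mul_mul_comm, ← Complex.exp_add]
  congr 1
  · push_cast; ring
  · congr 1; push_cast; ring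

end AuxStmt16

/-- Almost orthogonality of `h`-separated plane waves on the unit ball: if the
frequencies `ξ_j` are pairwise separated by at least `c₀ h`, then
`‖Σ a_j e^{(i/h)⟨y,ξ_j⟩}‖²_{L²(B₁(0))} ≤ C ‖a‖²_{ℓ²}` with `C = C(n, c₀)`
independent of `h` and `N`. -/
theorem stmt16 (n : ℕ) (c₀ : ℝ) (hc₀ : 0 < c₀) :
    ∃ C : ℝ, 0 < C ∧
      ∀ h : ℝ, 0 < h →
      ∀ (N : ℕ) (ξ : Fin N → Fin n → ℝ),
        (∀ j m : Fin N, j ≠ m →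
          c₀ * h ≤ Real.sqrt (∑ i, (ξ j i - ξ m i) ^ 2)) →
      ∀ a : Fin N → ℝ,
        (∫ y in Metric.ball (0 : EuclideanSpace ℝ (Fin n)) 1,
            Complex.normSq (∑ j, (a j : ℂ) *
              Complex.exp (Complex.I * ((h⁻¹ : ℝ) * ∑ i, y i * ξ j i))))
          ≤ C * ∑ j, a j ^ 2 := by
  classical
  set V : ℝ := (volume (ball (0 : EuclideanSpace ℝ (Fin n)) (c₀/2))).toReal with hV
  have hVpos : 0 < V := ENNReal.toReal_pos
    (ne_of_gt (measure_ball_pos volume 0 (by linarith))) measure_ball_lt_top.ne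
  set S : ℝ := Real.exp ((c₀/2)^2/2) * (4*Real.pi) ^ ((n:ℝ)/2) / V with hS
  have hSpos : 0 < S := div_pos (mul_pos (Real.exp_pos _)
    (Real.rpow_pos_of_pos (by positivity) _)) hVpos
  set E2 : ℝ := Real.exp (1/2) * (2*Real.pi) ^ ((n:ℝ)/2) with hE2
  have hE2pos : 0 < E2 := mul_pos (Real.exp_pos _) (Real.rpow_pos_of_pos (by positivity) _)
  refine ⟨E2 * S, mul_pos hE2pos hSpos, ?_⟩
  intro h hh N ξ hsep a
  set η : Fin N → EuclideanSpace ℝ (Fin n) :=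
    fun j => (EuclideanSpace.equiv (Fin n) ℝ).symm (fun i => h⁻¹ * ξ j i) with hη
  have hηi : ∀ j i, η j i = h⁻¹ * ξ j i := fun j i => rfl
  have hτ : ∀ (j : Fin N) (y : EuclideanSpace ℝ (Fin n)),
      h⁻¹ * ∑ i, y i * ξ j i = ⟪η j, y⟫ := by
    intro j y
    simp only [PiLp.inner_apply, RCLike.inner_apply, conj_trivial, hηi]
    rw [Finset.mul_sum]
    exact Finset.sum_congr rfl (fun i _ => by ring)
  have hsepη : ∀ j m : Fin N, j ≠ m → 2 * (c₀/2) ≤ dist (η j) (η m) := by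
    intro j m hjm
    have hd : dist (η j) (η m) = h⁻¹ * Real.sqrt (∑ i, (ξ j i - ξ m i)^2) := by
      rw [EuclideanSpace.dist_eq]
      have key : ∀ i : Fin n, dist (η j i) (η m i)^2 = (h⁻¹)^2 * (ξ j i - ξ m i)^2 := by
        intro i
        rw [Real.dist_eq, _root_.sq_abs, hηi, hηi]
        ring
      rw [Finset.sum_congr rfl (fun i _ => key i), ← Finset.mul_sum,
        Real.sqrt_mul (sq_nonneg _), Real.sqrt_sq (by positivity)]
    rw [hd]
    have h1 := hsep j m hjm
    rw [show (2 : ℝ) * (c₀/2) = c₀ by ring]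
    calc c₀ = h⁻¹ * (c₀ * h) := by field_simp
    _ ≤ h⁻¹ * Real.sqrt (∑ i, (ξ j i - ξ m i)^2) :=
        mul_le_mul_of_nonneg_left h1 (by positivity)
  set f : EuclideanSpace ℝ (Fin n) → ℂ := fun y => ∑ j, (a j : ℂ) *
      Complex.exp (Complex.I * ((h⁻¹ : ℝ) * ∑ i, y i * ξ j i)) with hf
  set G : EuclideanSpace ℝ (Fin n) → ℝ :=
    fun y => Real.exp ((1 - ‖y‖^2)/2) * Complex.normSq (f y) with hG
  set F : EuclideanSpace ℝ (Fin n) → ℂ := fun y => ∑ j, ∑ m, ((a j * a m : ℝ) : ℂ) *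
      (Complex.exp ((1:ℂ)/2) *
        Complex.exp (-(1/2 : ℂ) * (‖y‖:ℂ)^2 + Complex.I * (⟪η j - η m, y⟫ : ℝ))) with hF
  have hterm_int : ∀ j m : Fin N, Integrable (fun y : EuclideanSpace ℝ (Fin n) =>
      ((a j * a m : ℝ) : ℂ) * (Complex.exp ((1:ℂ)/2) *
        Complex.exp (-(1/2 : ℂ) * (‖y‖:ℂ)^2 + Complex.I * (⟪η j - η m, y⟫ : ℝ)))) :=
    fun j m => Integrable.const_mul (Integrable.const_mul
      (GaussianFourier.integrable_cexp_neg_mul_sq_norm_add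
        (V := EuclideanSpace ℝ (Fin n)) (b := (1/2 : ℂ)) (by norm_num) Complex.I (η j - η m))
      (Complex.exp ((1:ℂ)/2))) _
  have hFint : Integrable F :=
    integrable_finset_sum _ (fun j _ => integrable_finset_sum _ (fun m _ => hterm_int j m))
  -- rewrite f with inner products
  have hfy : ∀ y, f y = ∑ j, (a j : ℂ) * Complex.exp (Complex.I * ((⟪η j, y⟫ : ℝ) : ℂ)) := by
    intro y
    rw [hf]
    refine Finset.sum_congr rfl (fun j _ => ?_)
    rw [show ((h⁻¹ : ℝ) : ℂ) * ((∑ i, y i * ξ j i : ℝ) : ℂ)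
      = ((h⁻¹ * ∑ i, y i * ξ j i : ℝ) : ℂ) by push_cast; ring, hτ j y]
  have hGF : ∀ y, ((G y : ℝ) : ℂ) = F y := by
    intro y
    rw [hG]
    push_cast
    rw [← Complex.mul_conj, hfy y, sum_mul_conj a (fun j => ⟪η j, y⟫), hF, Finset.mul_sum]
    refine Finset.sum_congr rfl (fun j _ => ?_)
    rw [Finset.mul_sum]
    refine Finset.sum_congr rfl (fun m _ => ?_)
    rw [inner_sub_left]
    push_cast
    rw [mul_left_comm, ← Complex.exp_add, ← Complex.exp_add]
    congr 2
    ring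
  have hGint : Integrable G := by
    have h1 : Integrable (fun y => ((G y : ℝ) : ℂ)) := by
      simpa only [funext hGF] using hFint
    simpa using h1.re
  -- value of the Gaussian integral
  have hval : ∫ y, G y = ∑ j, ∑ m, (a j * a m) *
      (E2 * Real.exp (-(dist (η j) (η m))^2/2)) := by
    have h2 : ∫ y, F y = ((∑ j, ∑ m, (a j * a m) *
        (E2 * Real.exp (-(dist (η j) (η m))^2/2)) : ℝ) : ℂ) := by
      simp only [hE2]
      rw [hF, integral_finset_sum _ (fun j _ => integrable_finset_sum _
        (fun m _ => hterm_int j m)), Complex.ofReal_sum]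
      refine Finset.sum_congr rfl (fun j _ => ?_)
      rw [integral_finset_sum _ (fun m _ => hterm_int j m), Complex.ofReal_sum]
      refine Finset.sum_congr rfl (fun m _ => ?_)
      rw [integral_const_mul, integral_const_mul, gram_entry' (η j - η m), ← dist_eq_norm]
      rw [show Complex.exp ((1:ℂ)/2) = ((Real.exp (1/2) : ℝ) : ℂ) by
        rw [Complex.ofReal_exp]; norm_num]
      push_cast
      ring
    have h1 : ((∫ y, G y : ℝ) : ℂ) = ∫ y, F y := by
      refine (integral_ofReal).symm.trans ?_
      exact integral_congr_ae (Filter.Eventually.of_forall hGF)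
    exact_mod_cast h1.trans h2
  -- continuity / integrability on the ball
  have hcont : Continuous f := by
    rw [hf]
    refine continuous_finset_sum _ (fun j _ => continuous_const.mul
      (Complex.continuous_exp.comp (continuous_const.mul
        (continuous_const.mul (Complex.continuous_ofReal.comp
          (continuous_finset_sum _ (fun i _ =>
            ((EuclideanSpace.proj (𝕜 := ℝ) i).continuous.mul continuous_const))))))))
  have hle1 : ∫ y in ball (0 : EuclideanSpace ℝ (Fin n)) 1, Complex.normSq (f y)
      ≤ ∫ y, G y := by
    have hpt : ∀ y ∈ ball (0 : EuclideanSpace ℝ (Fin n)) 1, Complex.normSq (f y) ≤ G y := by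
      intro y hy
      rw [hG]
      have h1 : ‖y‖ < 1 := mem_ball_zero_iff.1 hy
      have h2 : (1:ℝ) ≤ Real.exp ((1 - ‖y‖^2)/2) :=
        Real.one_le_exp (by nlinarith [norm_nonneg y])
      nlinarith [Complex.normSq_nonneg (f y)]
    have hIntOn : IntegrableOn (fun y => Complex.normSq (f y))
        (ball (0 : EuclideanSpace ℝ (Fin n)) 1) :=
      (((Complex.continuous_normSq.comp hcont).locallyIntegrable).integrableOn_isCompact
        (isCompact_closedBall _ _)).mono_set ball_subset_closedBall
    calc ∫ y in ball (0 : EuclideanSpace ℝ (Fin n)) 1, Complex.normSq (f y)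
        ≤ ∫ y in ball (0 : EuclideanSpace ℝ (Fin n)) 1, G y :=
          setIntegral_mono_on hIntOn hGint.integrableOn measurableSet_ball hpt
      _ ≤ ∫ y, G y := setIntegral_le_integral hGint
          (Filter.Eventually.of_forall (fun y => mul_nonneg (Real.exp_nonneg _)
            (Complex.normSq_nonneg _)))
  -- Schur test
  have hrow : ∀ j, ∑ m, Real.exp (-(dist (η j) (η m))^2/2) ≤ S := by
    intro j
    have hr := rowsum' (show (0:ℝ) < c₀/2 by linarith) η hsepη j
    rw [hS, hV]
    exact hr
  have hschur : ∑ j, ∑ m, (a j * a m) * (E2 * Real.exp (-(dist (η j) (η m))^2/2))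
      ≤ E2 * S * ∑ j, a j ^ 2 := by
    have hK0 : ∀ j m : Fin N, (0:ℝ) ≤ Real.exp (-(dist (η j) (η m))^2/2) :=
      fun j m => Real.exp_nonneg _
    have hsym : ∑ j, ∑ m, (a m^2/2) * (E2 * Real.exp (-(dist (η j) (η m))^2/2))
        = ∑ j, ∑ m, (a j^2/2) * (E2 * Real.exp (-(dist (η j) (η m))^2/2)) := by
      rw [Finset.sum_comm]
      exact Finset.sum_congr rfl (fun j _ => Finset.sum_congr rfl (fun m _ => by
        rw [dist_comm]))
    calc ∑ j, ∑ m, (a j * a m) * (E2 * Real.exp (-(dist (η j) (η m))^2/2))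
        ≤ ∑ j, ∑ m, ((a j^2 + a m^2)/2) * (E2 * Real.exp (-(dist (η j) (η m))^2/2)) :=
          Finset.sum_le_sum (fun j _ => Finset.sum_le_sum (fun m _ =>
            mul_le_mul_of_nonneg_right (by nlinarith [sq_nonneg (a j - a m)])
              (mul_nonneg hE2pos.le (hK0 j m))))
      _ = (∑ j, ∑ m, (a j^2/2) * (E2 * Real.exp (-(dist (η j) (η m))^2/2)))
          + ∑ j, ∑ m, (a m^2/2) * (E2 * Real.exp (-(dist (η j) (η m))^2/2)) := by
          rw [← Finset.sum_add_distrib]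
          exact Finset.sum_congr rfl (fun j _ => by
            rw [← Finset.sum_add_distrib]
            exact Finset.sum_congr rfl (fun m _ => by ring))
      _ = ∑ j, a j^2 * (E2 * ∑ m, Real.exp (-(dist (η j) (η m))^2/2)) := by
          rw [hsym, ← Finset.sum_add_distrib]
          refine Finset.sum_congr rfl (fun j _ => ?_)
          rw [← Finset.sum_add_distrib, Finset.mul_sum, Finset.mul_sum]
          exact Finset.sum_congr rfl (fun m _ => by ring)
      _ ≤ ∑ j, a j^2 * (E2 * S) :=
          Finset.sum_le_sum (fun j _ => mul_le_mul_of_nonneg_left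
            (mul_le_mul_of_nonneg_left (hrow j) hE2pos.le) (sq_nonneg _))
      _ = E2 * S * ∑ j, a j ^ 2 := by
          rw [Finset.mul_sum]
          exact Finset.sum_congr rfl (fun j _ => by ring)
  calc (∫ y in ball (0 : EuclideanSpace ℝ (Fin n)) 1, Complex.normSq (f y))
      ≤ ∫ y, G y := hle1
    _ = ∑ j, ∑ m, (a j * a m) * (E2 * Real.exp (-(dist (η j) (η m))^2/2)) := hval
    _ ≤ E2 * S * ∑ j, a j ^ 2 := hschur
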